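/- Let Λ ⊂ {1,…,N}, let x̃ ∈ ℝ^N with supp(x̃) ∩ Λ = ∅, let T ⊆ {1,…,N} with T ∩ (supp(x̃) ∪ Λ) = ∅, and set h = A_Λᵀ A_Λ x̃. If the M×N real matrix Φ satisfies the RIP of order |T ∪ supp(x̃)| + |Λ| with isometry constant δ, then ‖h|_T‖₂ = ‖h|_T − x̃|_T‖₂ ≤ (δ/(1−δ))‖x̃‖₂. -/

import Mathlib

noncomputable section

namespace OMP

open Matrix Finset

/-- The support of a vector, as a `Finset`. -/
def supp {n : ℕ} (x : Fin n → ℝ) : Finset (Fin n) :=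
  Finset.univ.filter fun j => x j ≠ 0

/-- The Euclidean (ℓ²) norm of a vector. -/
def l2 {n : ℕ} (x : Fin n → ℝ) : ℝ := Real.sqrt (∑ j, x j ^ 2)

/-- The ℓ^∞ norm of a vector. -/
def linf {n : ℕ} (x : Fin n → ℝ) : ℝ := ⨆ j, |x j|

/-- The standard inner product of two vectors. -/
def dotp {n : ℕ} (x y : Fin n → ℝ) : ℝ := ∑ j, x j * y j

/-- The restriction of a vector to a set of indices (zero elsewhere). -/
def restr {n : ℕ} (Γ : Finset (Fin n)) (x : Fin n → ℝ) : Fin n → ℝ :=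
  fun j => if j ∈ Γ then x j else 0

/-- The restricted isometry property of order `K` with isometry constant `δ`. -/
def RIP {M N : ℕ} (K : ℕ) (Φ : Matrix (Fin M) (Fin N) ℝ) (δ : ℝ) : Prop :=
  0 < δ ∧ δ < 1 ∧ ∀ x : Fin N → ℝ, (supp x).card ≤ K →
    (1 - δ) * l2 x ^ 2 ≤ l2 (Φ.mulVec x) ^ 2 ∧
      l2 (Φ.mulVec x) ^ 2 ≤ (1 + δ) * l2 x ^ 2

/-- The span of the columns of `Φ` indexed by `Λ`, as a submodule of Euclidean space. -/
def colSpan {M N : ℕ} (Φ : Matrix (Fin M) (Fin N) ℝ) (Λ : Finset (Fin N)) :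
    Submodule ℝ (EuclideanSpace ℝ (Fin M)) :=
  Submodule.span ℝ ((fun j => (WithLp.equiv 2 (Fin M → ℝ)).symm fun i => Φ i j) '' (Λ : Set (Fin N)))

/-- Orthogonal projection `P_Λ` onto the span of the columns of `Φ` indexed by `Λ`. -/
def projCol {M N : ℕ} (Φ : Matrix (Fin M) (Fin N) ℝ) (Λ : Finset (Fin N))
    (v : Fin M → ℝ) : Fin M → ℝ :=
  WithLp.equiv 2 (Fin M → ℝ)
    (Submodule.orthogonalProjection (colSpan Φ Λ) ((WithLp.equiv 2 (Fin M → ℝ)).symm v) : EuclideanSpace ℝ (Fin M))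

/-- The matrix `A_Λ = (I - P_Λ) Φ`: the columns of `Φ` orthogonalized against `colSpan Φ Λ`. -/
def Amat {M N : ℕ} (Φ : Matrix (Fin M) (Fin N) ℝ) (Λ : Finset (Fin N)) :
    Matrix (Fin M) (Fin N) ℝ :=
  Matrix.of fun i j => Φ i j - projCol Φ Λ (fun i' => Φ i' j) i

/-! ### Auxiliary lemmas -/

section Aux

variable {M N n : ℕ}

lemma mem_supp_iff {x : Fin n → ℝ} {j : Fin n} : j ∈ supp x ↔ x j ≠ 0 := by
  simp [supp]

lemma supp_subset_of {x : Fin n → ℝ} {S : Finset (Fin n)}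
    (h : ∀ j, j ∉ S → x j = 0) : supp x ⊆ S := by
  intro j hj
  by_contra hjS
  exact (mem_supp_iff.1 hj) (h j hjS)

lemma dotp_self_eq (x : Fin n → ℝ) : dotp x x = ∑ j, x j ^ 2 := by
  simp [dotp, sq]

lemma dotp_self_nonneg (x : Fin n → ℝ) : 0 ≤ dotp x x :=
  Finset.sum_nonneg fun j _ => mul_self_nonneg _

lemma l2_sq (x : Fin n → ℝ) : l2 x ^ 2 = dotp x x := by
  rw [dotp_self_eq, l2, Real.sq_sqrt]
  positivity

lemma l2_nonneg (x : Fin n → ℝ) : 0 ≤ l2 x := Real.sqrt_nonneg _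

lemma eq_zero_of_l2 {x : Fin n → ℝ} (h : l2 x = 0) : x = 0 := by
  have h2 : dotp x x = 0 := by rw [← l2_sq, h]; ring
  rw [dotp_self_eq] at h2
  funext j
  have := (Finset.sum_eq_zero_iff_of_nonneg (fun i _ => sq_nonneg (x i))).1 h2 j (mem_univ j)
  exact pow_eq_zero_iff (by norm_num) |>.1 this

lemma dotp_comm (x y : Fin n → ℝ) : dotp x y = dotp y x := by
  simp [dotp, mul_comm]

lemma dotp_smul_left (c : ℝ) (x y : Fin n → ℝ) : dotp (c • x) y = c * dotp x y := by
  simp [dotp, Finset.mul_sum, mul_assoc]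

lemma dotp_smul_right (c : ℝ) (x y : Fin n → ℝ) : dotp x (c • y) = c * dotp x y := by
  simp [dotp, Finset.mul_sum]; exact Finset.sum_congr rfl fun j _ => by ring

lemma dotp_sub_left (x y z : Fin n → ℝ) : dotp (x - y) z = dotp x z - dotp y z := by
  simp [dotp, sub_mul, Finset.sum_sub_distrib]

lemma dotp_expand (x y : Fin n → ℝ) (s : ℝ) :
    dotp (x + s • y) (x + s • y) = dotp x x + 2 * s * dotp x y + s ^ 2 * dotp y y := by
  simp only [dotp, Pi.add_apply, Pi.smul_apply, smul_eq_mul, Finset.mul_sum,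
    ← Finset.sum_add_distrib]
  exact Finset.sum_congr rfl fun j _ => by ring

lemma dotp_disjoint {x y : Fin n → ℝ} (h : ∀ j, x j = 0 ∨ y j = 0) : dotp x y = 0 :=
  Finset.sum_eq_zero fun j _ => by rcases h j with h' | h' <;> simp [h']

/-- Generic polarization lemma: a two-sided RIP-type bound for `B` on vectors
supported in `S` yields near-orthogonality of images of disjointly supported vectors. -/
lemma pol (B : Matrix (Fin M) (Fin N) ℝ) (S : Finset (Fin N)) (δ₁ δ₂ : ℝ)
    (hB : ∀ x : Fin N → ℝ, (∀ j, j ∉ S → x j = 0) →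
      (1 - δ₂) * l2 x ^ 2 ≤ l2 (B.mulVec x) ^ 2 ∧ l2 (B.mulVec x) ^ 2 ≤ (1 + δ₁) * l2 x ^ 2)
    (a b : Fin N → ℝ) (ha : ∀ j, j ∉ S → a j = 0) (hb : ∀ j, j ∉ S → b j = 0)
    (hd : ∀ j, a j = 0 ∨ b j = 0) :
    |dotp (B.mulVec a) (B.mulVec b)| ≤ (δ₁ + δ₂) / 2 * (l2 a * l2 b) := by
  have key : ∀ u v : Fin N → ℝ, (∀ j, j ∉ S → u j = 0) → (∀ j, j ∉ S → v j = 0) →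
      dotp u v = 0 →
      4 * dotp (B.mulVec u) (B.mulVec v) ≤ (δ₁ + δ₂) * (dotp u u + dotp v v) := by
    intro u v hu hv huv
    have h1 := (hB (u + (1:ℝ) • v) (fun j hj => by simp [hu j hj, hv j hj])).2
    have h2 := (hB (u + (-1:ℝ) • v) (fun j hj => by simp [hu j hj, hv j hj])).1
    have e1 : B.mulVec (u + (1:ℝ) • v) = B.mulVec u + (1:ℝ) • B.mulVec v := by
      rw [Matrix.mulVec_add, Matrix.mulVec_smul]
    have e2 : B.mulVec (u + (-1:ℝ) • v) = B.mulVec u + (-1:ℝ) • B.mulVec v := by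
      rw [Matrix.mulVec_add, Matrix.mulVec_smul]
    rw [l2_sq, l2_sq, e1, dotp_expand, dotp_expand] at h1
    rw [l2_sq, l2_sq, e2, dotp_expand, dotp_expand] at h2
    rw [huv] at h1 h2
    nlinarith [h1, h2]
  rcases eq_or_ne (l2 a) 0 with h0 | h0
  · have : a = 0 := eq_zero_of_l2 h0
    subst this
    simp [Matrix.mulVec_zero, dotp, h0]
  rcases eq_or_ne (l2 b) 0 with h0' | h0'
  · have : b = 0 := eq_zero_of_l2 h0'
    subst this
    simp [Matrix.mulVec_zero, dotp, h0']
  have hla : 0 < l2 a := lt_of_le_of_ne (l2_nonneg a) (Ne.symm h0)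
  have hlb : 0 < l2 b := lt_of_le_of_ne (l2_nonneg b) (Ne.symm h0')
  have hd' : dotp a b = 0 := dotp_disjoint hd
  have hab : dotp b a = 0 := by rw [dotp_comm]; exact hd'
  -- apply key to (±l2 b • a, l2 a • b)
  have k1 := key (l2 b • a) (l2 a • b)
    (fun j hj => by simp [ha j hj]) (fun j hj => by simp [hb j hj])
    (by rw [dotp_smul_left, dotp_comm, dotp_smul_left, dotp_comm, hd']; ring)
  have k2 := key ((-(l2 b)) • a) (l2 a • b)
    (fun j hj => by simp [ha j hj]) (fun j hj => by simp [hb j hj])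
    (by rw [dotp_smul_left, dotp_comm, dotp_smul_left, dotp_comm, hd']; ring)
  simp only [Matrix.mulVec_smul, dotp_smul_left, dotp_smul_right] at k1 k2
  have la2 : dotp a a = l2 a ^ 2 := (l2_sq a).symm
  have lb2 : dotp b b = l2 b ^ 2 := (l2_sq b).symm
  rw [la2, lb2] at k1 k2
  rw [abs_le]
  constructor <;> nlinarith [mul_pos hla hlb, k1, k2]

end Aux

section Proj

variable {M N : ℕ} (Φ : Matrix (Fin M) (Fin N) ℝ) (Λ : Finset (Fin N))

/-- The projection `projCol` as a linear map on plain vectors. -/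
def projL : (Fin M → ℝ) →ₗ[ℝ] (Fin M → ℝ) :=
  (WithLp.linearEquiv 2 ℝ (Fin M → ℝ)).toLinearMap ∘ₗ
    ((colSpan Φ Λ).subtype ∘ₗ (Submodule.orthogonalProjection (colSpan Φ Λ)).toLinearMap) ∘ₗ
      (WithLp.linearEquiv 2 ℝ (Fin M → ℝ)).symm.toLinearMap

lemma projCol_eq_projL (v : Fin M → ℝ) : projCol Φ Λ v = projL Φ Λ v := rfl

lemma projCol_mem (v : Fin M → ℝ) :
    (WithLp.equiv 2 (Fin M → ℝ)).symm (projCol Φ Λ v) ∈ colSpan Φ Λ := by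
  simp only [projCol, Equiv.symm_apply_apply]
  exact (Submodule.orthogonalProjection (colSpan Φ Λ) _).2

lemma dotp_orth (v u : Fin M → ℝ) (hu : (WithLp.equiv 2 (Fin M → ℝ)).symm u ∈ colSpan Φ Λ) :
    dotp (v - projCol Φ Λ v) u = 0 := by
  have h := Submodule.sub_starProjection_mem_orthogonal (K := colSpan Φ Λ)
    ((WithLp.equiv 2 (Fin M → ℝ)).symm v)
  have h2 := (Submodule.mem_orthogonal (colSpan Φ Λ) _).1 h _ hu
  have h3 : ((WithLp.equiv 2 (Fin M → ℝ)).symm v -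
      (Submodule.starProjection (colSpan Φ Λ) ((WithLp.equiv 2 (Fin M → ℝ)).symm v) :
        EuclideanSpace ℝ (Fin M)))
      = (WithLp.equiv 2 (Fin M → ℝ)).symm (v - projCol Φ Λ v) := rfl
  rw [h3, PiLp.inner_apply] at h2
  simp only [RCLike.inner_apply, conj_trivial] at h2
  calc dotp (v - projCol Φ Λ v) u = ∑ i, u i * (v - projCol Φ Λ v) i :=
        Finset.sum_congr rfl fun i _ => mul_comm _ _
    _ = 0 := (Finset.sum_congr rfl fun i _ => mul_comm _ _).trans h2

lemma exists_preimage (v : Fin M → ℝ)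
    (hv : (WithLp.equiv 2 (Fin M → ℝ)).symm v ∈ colSpan Φ Λ) :
    ∃ w : Fin N → ℝ, (∀ j, j ∉ Λ → w j = 0) ∧ Φ.mulVec w = v := by
  rw [colSpan, Finsupp.mem_span_image_iff_linearCombination] at hv
  obtain ⟨l, hl, hsum⟩ := hv
  rw [Finsupp.mem_supported] at hl
  refine ⟨fun j => if j ∈ Λ then l j else 0, fun j hj => by simp [hj], ?_⟩
  have h2 := congrArg (WithLp.equiv 2 (Fin M → ℝ)) hsum
  rw [Equiv.apply_symm_apply] at h2
  funext i
  have h3 := congrFun h2 i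
  rw [Finsupp.linearCombination_apply, Finsupp.sum] at h3
  set evalL : WithLp 2 (Fin M → ℝ) →ₗ[ℝ] ℝ :=
    (LinearMap.proj i).comp (WithLp.linearEquiv 2 ℝ (Fin M → ℝ)).toLinearMap with hevalL
  have h4 : (WithLp.equiv 2 (Fin M → ℝ))
      (∑ j ∈ l.support, l j • (WithLp.equiv 2 (Fin M → ℝ)).symm fun i => Φ i j) i
      = ∑ j ∈ l.support, l j * Φ i j := by
    have := map_sum evalL (fun j => l j • (WithLp.equiv 2 (Fin M → ℝ)).symm fun i => Φ i j)
      l.support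
    simp only [hevalL, LinearMap.coe_comp, Function.comp_apply, LinearMap.proj_apply,
      LinearEquiv.coe_coe, _root_.map_smul, Pi.smul_apply, smul_eq_mul] at this
    exact this
  rw [h4] at h3
  rw [← h3, Matrix.mulVec, dotProduct]
  rw [← Finset.sum_subset (Finset.subset_univ l.support)]
  · refine Finset.sum_congr rfl fun j hj => ?_
    have : j ∈ Λ := hl hj
    simp [this, mul_comm]
  · intro j _ hj
    simp [Finsupp.notMem_support_iff.1 hj]

lemma Amat_mulVec (x : Fin N → ℝ) :
    (Amat Φ Λ).mulVec x = Φ.mulVec x - projCol Φ Λ (Φ.mulVec x) := by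
  have hcols : Φ.mulVec x = ∑ j, x j • (fun i => Φ i j) := by
    funext i
    simp [Matrix.mulVec, dotProduct, Finset.sum_apply, mul_comm]
  have hproj : projCol Φ Λ (Φ.mulVec x) = ∑ j, x j • projCol Φ Λ (fun i => Φ i j) := by
    rw [projCol_eq_projL, hcols, map_sum]
    simp only [_root_.map_smul, projCol_eq_projL]
  funext i
  rw [hproj]
  simp only [Amat, Matrix.mulVec, dotProduct, Matrix.of_apply, Pi.sub_apply,
    Finset.sum_apply, Pi.smul_apply, smul_eq_mul, sub_mul, Finset.sum_sub_distrib]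
  congr 1
  exact Finset.sum_congr rfl fun j _ => mul_comm _ _

end Proj

section Main

variable {M N : ℕ} (Φ : Matrix (Fin M) (Fin N) ℝ) (Λ : Finset (Fin N))

/-- The modified RIP satisfied by `A_Λ` (Davenport–Wakin Lemma). -/
lemma ARIP {K : ℕ} {δ : ℝ} (hR : RIP K Φ δ) (x : Fin N → ℝ)
    (hx : ∀ j, j ∈ Λ → x j = 0) (hc : (supp x).card + Λ.card ≤ K) :
    (1 - δ / (1 - δ)) * l2 x ^ 2 ≤ l2 ((Amat Φ Λ).mulVec x) ^ 2 ∧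
      l2 ((Amat Φ Λ).mulVec x) ^ 2 ≤ (1 + δ) * l2 x ^ 2 := by
  obtain ⟨hδ0, hδ1, hrip⟩ := hR
  have h1δ : (0:ℝ) < 1 - δ := by linarith
  set p := projCol Φ Λ (Φ.mulVec x) with hp
  obtain ⟨w, hw0, hwp⟩ := exists_preimage Φ Λ p (projCol_mem Φ Λ _)
  have hsx : (supp x).card ≤ K := le_trans (Nat.le_add_right _ _) hc
  have hsw : supp w ⊆ Λ := supp_subset_of hw0
  have hB : ∀ y : Fin N → ℝ, (∀ j, j ∉ supp x ∪ Λ → y j = 0) →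
      (1 - δ) * l2 y ^ 2 ≤ l2 (Φ.mulVec y) ^ 2 ∧ l2 (Φ.mulVec y) ^ 2 ≤ (1 + δ) * l2 y ^ 2 := by
    intro y hy
    refine hrip y (le_trans (Finset.card_le_card (supp_subset_of hy)) ?_)
    exact le_trans (Finset.card_union_le _ _) hc
  have hdisj : ∀ j, x j = 0 ∨ w j = 0 := fun j => by
    by_cases hj : j ∈ Λ
    · exact Or.inl (hx j hj)
    · exact Or.inr (hw0 j hj)
  have hcross := pol Φ (supp x ∪ Λ) δ δ hB x w
    (fun j hj => by
      by_contra h'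
      exact hj (Finset.mem_union_left _ (mem_supp_iff.2 h')))
    (fun j hj => hw0 j fun hC => hj (Finset.mem_union_right _ hC))
    hdisj
  have hcross' : dotp (Φ.mulVec x) (Φ.mulVec w) ≤ δ * (l2 x * l2 w) := by
    have := le_trans (le_abs_self _) hcross
    have e : (δ + δ) / 2 = δ := by ring
    rw [e] at this
    exact this
  have hAx : (Amat Φ Λ).mulVec x = Φ.mulVec x - p := Amat_mulVec Φ Λ x
  have horth : dotp (Φ.mulVec x - p) p = 0 := dotp_orth Φ Λ _ p (projCol_mem Φ Λ _)
  have hxp : dotp (Φ.mulVec x) p = dotp p p := by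
    have := dotp_sub_left (Φ.mulVec x) p p
    rw [horth] at this
    linarith
  have hAA : dotp ((Amat Φ Λ).mulVec x) ((Amat Φ Λ).mulVec x)
      = dotp (Φ.mulVec x) (Φ.mulVec x) - dotp p p := by
    rw [hAx]
    have e : Φ.mulVec x - p = Φ.mulVec x + (-1 : ℝ) • p := by
      funext i
      simp only [Pi.sub_apply, Pi.add_apply, Pi.smul_apply, smul_eq_mul]
      ring
    rw [e, dotp_expand, hxp]
    ring
  have hpp : dotp p p = dotp (Φ.mulVec x) (Φ.mulVec w) := by rw [hwp, hxp]
  have hw_rip := (hrip w (le_trans (Finset.card_le_card hsw)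
    (le_trans (Nat.le_add_left _ _) hc))).1
  rw [hwp] at hw_rip
  have hx_rip := hrip x hsx
  have hlw : l2 w ≤ δ / (1 - δ) * l2 x := by
    rcases eq_or_ne (l2 w) 0 with h0 | h0
    · rw [h0]
      exact mul_nonneg (div_nonneg hδ0.le h1δ.le) (l2_nonneg x)
    have hlwpos : 0 < l2 w := lt_of_le_of_ne (l2_nonneg w) (Ne.symm h0)
    have h1 : (1 - δ) * l2 w ^ 2 ≤ dotp p p := by rw [← l2_sq]; exact hw_rip
    rw [hpp] at h1
    rw [div_mul_eq_mul_div, le_div_iff₀ h1δ]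
    nlinarith [hcross', h1]
  have hpp_le : dotp p p ≤ δ ^ 2 / (1 - δ) * l2 x ^ 2 := by
    rw [hpp]
    have h2 : δ * (l2 x * l2 w) ≤ δ * (l2 x * (δ / (1 - δ) * l2 x)) := by
      have := mul_le_mul_of_nonneg_left hlw (l2_nonneg x)
      nlinarith [hδ0]
    have h3 : δ * (l2 x * (δ / (1 - δ) * l2 x)) = δ ^ 2 / (1 - δ) * l2 x ^ 2 := by
      field_simp
    linarith [hcross']
  constructor
  · rw [l2_sq ((Amat Φ Λ).mulVec x), hAA]
    have hlow : (1 - δ) * l2 x ^ 2 ≤ dotp (Φ.mulVec x) (Φ.mulVec x) := by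
      rw [← l2_sq]; exact hx_rip.1
    have expand : (1 - δ / (1 - δ)) * l2 x ^ 2
        = (1 - δ) * l2 x ^ 2 - δ ^ 2 / (1 - δ) * l2 x ^ 2 := by
      field_simp
      ring
    linarith
  · rw [l2_sq ((Amat Φ Λ).mulVec x), hAA]
    have hup : dotp (Φ.mulVec x) (Φ.mulVec x) ≤ (1 + δ) * l2 x ^ 2 := by
      rw [← l2_sq]; exact hx_rip.2
    have h2 : 0 ≤ dotp p p := dotp_self_nonneg p
    linarith

end Main

/-- upper bound on the energy of `h = A_Λᵀ A_Λ x̃` off the support of `x̃`. -/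
theorem stmt14 {M N : ℕ} (Φ : Matrix (Fin M) (Fin N) ℝ) (δ : ℝ) (Λ : Finset (Fin N))
    (xt : Fin N → ℝ) (hdisj : supp xt ∩ Λ = ∅)
    (T : Finset (Fin N)) (hT : T ∩ (supp xt ∪ Λ) = ∅)
    (hRIP : RIP ((T ∪ supp xt).card + Λ.card) Φ δ)
    (h : Fin N → ℝ) (hh : h = (Amat Φ Λ)ᵀ.mulVec ((Amat Φ Λ).mulVec xt)) :
    l2 (restr T h) = l2 (restr T (h - xt)) ∧ l2 (restr T h) ≤ δ / (1 - δ) * l2 xt := by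
  have hδ0 := hRIP.1
  have hδ1 := hRIP.2.1
  have h1δ : (0:ℝ) < 1 - δ := by linarith
  have hδ'0 : 0 < δ / (1 - δ) := div_pos hδ0 h1δ
  have hδδ' : δ ≤ δ / (1 - δ) := by
    rw [le_div_iff₀ h1δ]
    nlinarith
  have hTS : ∀ j ∈ T, xt j = 0 := by
    intro j hj
    by_contra h'
    have hm : j ∈ T ∩ (supp xt ∪ Λ) :=
      Finset.mem_inter.2 ⟨hj, Finset.mem_union_left _ (mem_supp_iff.2 h')⟩
    rw [hT] at hm
    exact absurd hm (Finset.notMem_empty j)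
  have part1 : restr T (h - xt) = restr T h := by
    funext j
    simp only [restr, Pi.sub_apply]
    split_ifs with hj
    · rw [hTS j hj]
      ring
    · rfl
  refine ⟨by rw [part1], ?_⟩
  have hΛT : ∀ j ∈ Λ, j ∉ T ∪ supp xt := by
    intro j hj hmem
    rcases Finset.mem_union.1 hmem with h' | h'
    · have hm : j ∈ T ∩ (supp xt ∪ Λ) :=
        Finset.mem_inter.2 ⟨h', Finset.mem_union_right _ hj⟩
      rw [hT] at hm
      exact absurd hm (Finset.notMem_empty j)
    · have hm : j ∈ supp xt ∩ Λ := Finset.mem_inter.2 ⟨h', hj⟩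
      rw [hdisj] at hm
      exact absurd hm (Finset.notMem_empty j)
  have hB : ∀ y : Fin N → ℝ, (∀ j, j ∉ T ∪ supp xt → y j = 0) →
      (1 - δ / (1 - δ)) * l2 y ^ 2 ≤ l2 ((Amat Φ Λ).mulVec y) ^ 2 ∧
        l2 ((Amat Φ Λ).mulVec y) ^ 2 ≤ (1 + δ) * l2 y ^ 2 := by
    intro y hy
    apply ARIP Φ Λ hRIP y (fun j hj => hy j (hΛT j hj))
    exact Nat.add_le_add_right (Finset.card_le_card (supp_subset_of hy)) _
  set u := restr T h with hu
  have hu0 : ∀ j, j ∉ T → u j = 0 := fun j hj => by simp [hu, restr, hj]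
  have hq := pol (Amat Φ Λ) (T ∪ supp xt) δ (δ / (1 - δ)) hB u xt
    (fun j hj => hu0 j fun hC => hj (Finset.mem_union_left _ hC))
    (fun j hj => by
      by_contra h'
      exact hj (Finset.mem_union_right _ (mem_supp_iff.2 h')))
    (fun j => by
      by_cases hj : j ∈ T
      · exact Or.inr (hTS j hj)
      · exact Or.inl (hu0 j hj))
  have heq : l2 u ^ 2 = dotp ((Amat Φ Λ).mulVec u) ((Amat Φ Λ).mulVec xt) := by
    have e1 : dotp u u = dotp u h := by
      refine Finset.sum_congr rfl fun j _ => ?_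
      simp only [hu, restr]
      split_ifs with hj <;> simp
    have e2 : dotp u h = dotp ((Amat Φ Λ).mulVec u) ((Amat Φ Λ).mulVec xt) := by
      rw [hh]
      show u ⬝ᵥ ((Amat Φ Λ)ᵀ.mulVec ((Amat Φ Λ).mulVec xt)) = _
      rw [Matrix.dotProduct_mulVec, Matrix.vecMul_transpose]
      rfl
    rw [l2_sq, e1, e2]
  have habs : dotp ((Amat Φ Λ).mulVec u) ((Amat Φ Λ).mulVec xt)
      ≤ (δ + δ / (1 - δ)) / 2 * (l2 u * l2 xt) := le_trans (le_abs_self _) hq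
  rcases eq_or_ne (l2 u) 0 with h0 | h0
  · rw [h0]
    exact mul_nonneg hδ'0.le (l2_nonneg xt)
  · have hlu : 0 < l2 u := lt_of_le_of_ne (l2_nonneg u) (Ne.symm h0)
    have hmain : l2 u ^ 2 ≤ δ / (1 - δ) * (l2 u * l2 xt) := by
      have hstep : (δ + δ / (1 - δ)) / 2 * (l2 u * l2 xt)
          ≤ δ / (1 - δ) * (l2 u * l2 xt) := by
        have hnn : 0 ≤ l2 u * l2 xt := mul_nonneg (l2_nonneg u) (l2_nonneg xt)
        nlinarith [hδδ']
      linarith [heq ▸ habs, hstep]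
    nlinarith [l2_nonneg xt]

end OMP
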